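/- Let f be a homeomorphism of the open unit disk 𝔻. If there exists a closed chain (X_i)_{i∈ℤ/rℤ} for f consisting of pairwise disjoint, free, path-connected, nonempty subsets of 𝔻, then f is recurrent, i.e. there exists a closed chain for f consisting of pairwise disjoint free open disks. (Proposition 1.4, case (i).) -/

import Mathlib

open Set Filter Metric Topology
open scoped NNReal

noncomputable section

/-- The open unit disk in the complex plane. -/
abbrev Disk : Set ℂ := Metric.ball 0 1

/-- The `k`-th iterate (`k ∈ ℤ`) of a homeomorphism of the open unit disk. -/
def fiter (f : ↥Disk ≃ₜ ↥Disk) (k : ℤ) : ↥Disk → ↥Disk := fun z => (f.toEquiv ^ k) z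

/-- A subset `X` of the disk is free for `f` if `f(X) ∩ X = ∅`. -/
def IsFreeSet (f : ↥Disk ≃ₜ ↥Disk) (X : Set ↥Disk) : Prop := (⇑f '' X) ∩ X = ∅

/-- An open disk: an open subset of `Disk` homeomorphic to `Disk`. -/
def IsOpenDisk (U : Set ↥Disk) : Prop := IsOpen U ∧ Nonempty (↥U ≃ₜ ↥Disk)

/-- `f` is recurrent: there is a closed chain of pairwise disjoint free open disks. -/
def RecurrentHomeo (f : ↥Disk ≃ₜ ↥Disk) : Prop :=
  ∃ r : ℕ, 1 ≤ r ∧ ∃ X : ZMod r → Set ↥Disk,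
    (∀ i, IsOpenDisk (X i)) ∧ (∀ i, IsFreeSet f (X i)) ∧
    (Pairwise fun i j => Disjoint (X i) (X j)) ∧
    (∀ i, ∃ k : ℤ, 1 ≤ k ∧ ((fiter f k '' X i) ∩ X (i + 1)).Nonempty)

/-- A "push" homeomorphism of `ℂ` moving `a` to `b`, identity far from `a`. -/
lemma exists_push (a b : ℂ) :
    ∃ h : ℂ ≃ₜ ℂ, h a = b ∧ ∀ z : ℂ, 2 * dist a b ≤ dist z a → h z = z := by
  rcases eq_or_ne a b with rfl | hab
  · exact ⟨Homeomorph.refl ℂ, rfl, fun z _ => rfl⟩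
  · have hd : 0 < dist a b := dist_pos.2 hab
    set R : ℝ := 2 * dist a b with hRdef
    have hR0 : 0 < R := by positivity
    set ψ : ℂ → ℝ := fun z => max (1 - dist z a / R) 0 with hψ
    set F : ℂ → ℂ := fun z => z + ψ z • (b - a) with hF
    have lip : ∀ z w : ℂ, |ψ z - ψ w| ≤ dist z w / R := by
      intro z w
      have habs : |dist w a - dist z a| ≤ dist z w := by
        rw [abs_sub_comm]
        exact (abs_dist_sub_le z w a).trans le_rfl
      have h1 : |(1 - dist z a / R) - (1 - dist w a / R)| ≤ dist z w / R := by
        have e : (1 - dist z a / R) - (1 - dist w a / R) = (dist w a - dist z a) / R := by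
          ring
        rw [e, abs_div, abs_of_pos hR0]
        exact div_le_div_of_nonneg_right habs hR0.le |>.trans le_rfl
      exact (abs_max_sub_max_le_abs _ _ _).trans h1
    have approx : ApproximatesLinearOn F
        ((ContinuousLinearEquiv.refl ℝ ℂ : ℂ ≃L[ℝ] ℂ) : ℂ →L[ℝ] ℂ) univ (1/2 : ℝ≥0) := by
      intro x _ y _
      simp only [ContinuousLinearEquiv.coe_coe, ContinuousLinearEquiv.refl_apply]
      have e : F x - F y - (x - y) = (ψ x - ψ y) • (b - a) := by
        simp only [hF]; module
      rw [e, norm_smul, Real.norm_eq_abs]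
      have hba : ‖b - a‖ = dist a b := by rw [← dist_eq_norm, dist_comm]
      have key : |ψ x - ψ y| * ‖b - a‖ ≤ dist x y / 2 := by
        calc |ψ x - ψ y| * ‖b - a‖ ≤ (dist x y / R) * ‖b - a‖ :=
              mul_le_mul_of_nonneg_right (lip x y) (norm_nonneg _)
          _ = dist x y / 2 := by rw [hba, hRdef]; field_simp
      refine key.trans ?_
      rw [dist_eq_norm]
      push_cast
      linarith [norm_nonneg (x - y)]
    have hc : Subsingleton ℂ ∨ (1/2 : ℝ≥0) <
        (‖(((ContinuousLinearEquiv.refl ℝ ℂ).symm :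
            ℂ ≃L[ℝ] ℂ) : ℂ →L[ℝ] ℂ)‖₊)⁻¹ := by
      right
      rw [ContinuousLinearEquiv.refl_symm]
      norm_num [ContinuousLinearEquiv.coe_refl, ContinuousLinearMap.nnnorm_id]
    refine ⟨approx.toHomeomorph F hc, ?_, ?_⟩
    · show F a = b
      have hψa : ψ a = 1 := by simp [hψ]
      simp [hF, hψa]
    · intro z hz
      show F z = z
      have hψz : ψ z = 0 := by
        simp only [hψ]
        rw [max_eq_right]
        have h1 : (1:ℝ) ≤ dist z a / R := by
          rw [le_div_iff₀ hR0]
          linarith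
        linarith
      simp [hF, hψz]

lemma image_subset_union_support (h : ℂ ≃ₜ ℂ) (S E : Set ℂ) (hid : ∀ z ∉ S, h z = z) :
    h '' E ⊆ E ∪ S := by
  rintro _ ⟨z, hz, rfl⟩
  by_cases hzS : h z ∈ S
  · exact Or.inr hzS
  · have h1 : h (h z) = h z := hid _ hzS
    have h2 : h z = z := h.injective h1
    rw [h2]; exact Or.inl hz

lemma exists_chainH (z : ℕ → ℂ) (n : ℕ) :
    ∃ H : ℂ ≃ₜ ℂ, H (z 0) = z n ∧
      (∀ w : ℂ, (∀ j < n, 2 * dist (z j) (z (j+1)) ≤ dist w (z j)) → H w = w) ∧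
      (∀ E : Set ℂ, H '' E ⊆
        E ∪ ⋃ j ∈ Finset.range n, closedBall (z j) (2 * dist (z j) (z (j+1)))) := by
  induction n with
  | zero => exact ⟨Homeomorph.refl ℂ, rfl, fun w _ => rfl, by simp⟩
  | succ n ih =>
    obtain ⟨H, h0, hfix, him⟩ := ih
    obtain ⟨p, hp, hpfix⟩ := exists_push (z n) (z (n+1))
    have hpid : ∀ v ∉ closedBall (z n) (2 * dist (z n) (z (n+1))), p v = v := by
      intro v hv
      refine hpfix v ?_
      rw [mem_closedBall, not_le] at hv
      exact hv.le
    refine ⟨H.trans p, ?_, ?_, ?_⟩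
    · show p (H (z 0)) = _
      rw [h0, hp]
    · intro w hw
      show p (H w) = w
      rw [hfix w (fun j hj => hw j (Nat.lt_succ_of_lt hj))]
      exact hpfix w (hw n (Nat.lt_succ_self n))
    · intro E
      have e1 : (H.trans p) '' E = p '' (H '' E) := by
        rw [Set.image_image]
        rfl
      rw [e1]
      have s1 : p '' (H '' E) ⊆ (H '' E) ∪ closedBall (z n) (2 * dist (z n) (z (n+1))) :=
        image_subset_union_support p _ _ hpid
      refine s1.trans ?_
      have s2 := him E
      rw [Finset.range_add_one]
      intro v hv
      rcases hv with hv | hv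
      · rcases s2 hv with hv' | hv'
        · exact Or.inl hv'
        · right
          simp only [Finset.mem_insert, Set.mem_iUnion] at hv' ⊢
          obtain ⟨j, hj, hvj⟩ := hv'
          exact ⟨j, Or.inr hj, hvj⟩
      · right
        simp only [Finset.mem_insert, Set.mem_iUnion]
        exact ⟨n, Or.inl rfl, hv⟩

lemma ball_homeo_unit (c : ℂ) (R : ℝ) (hR : 0 < R) :
    Nonempty (↥(ball c R) ≃ₜ ↥(ball (0:ℂ) 1)) := by
  let A : ℂ ≃ₜ ℂ :=
    { toFun := fun z => c + R • z
      invFun := fun z => R⁻¹ • (z - c)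
      left_inv := by
        intro z
        have hRc : (R:ℂ) ≠ 0 := by exact_mod_cast hR.ne'
        simp only [smul_eq_mul, Complex.real_smul]
        push_cast
        field_simp
        ring
      right_inv := by
        intro z
        have hRc : (R:ℂ) ≠ 0 := by exact_mod_cast hR.ne'
        simp only [smul_eq_mul, Complex.real_smul]
        push_cast
        field_simp
        ring
      continuous_toFun := by continuity
      continuous_invFun := by continuity }
  have himg : A '' (ball (0:ℂ) 1) = ball c R := by
    ext w
    simp only [Set.mem_image, mem_ball]
    constructor
    · rintro ⟨u, hu, rfl⟩
      show dist (c + R • u) c < R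
      rw [dist_eq_norm]
      have : c + R • u - c = R • u := by module
      rw [this, norm_smul, Real.norm_eq_abs, abs_of_pos hR]
      have hu' : ‖u‖ < 1 := by simpa [dist_eq_norm] using hu
      nlinarith [norm_nonneg u]
    · intro hw
      refine ⟨R⁻¹ • (w - c), ?_, ?_⟩
      · show dist (R⁻¹ • (w - c)) 0 < 1
        rw [dist_zero_right, norm_smul, Real.norm_eq_abs, abs_of_pos (inv_pos.2 hR)]
        rw [dist_eq_norm] at hw
        rw [inv_mul_lt_iff₀ hR, mul_one]
        exact hw
      · show c + R • (R⁻¹ • (w - c)) = w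
        rw [smul_smul, mul_inv_cancel₀ hR.ne', one_smul]
        ring
  exact ⟨(Homeomorph.setCongr himg).symm.trans (A.image (ball (0:ℂ) 1)).symm⟩

lemma homeo_val_preimage {α : Type*} [TopologicalSpace α] (s : Set α) (U : Set α) (hU : U ⊆ s) :
    Nonempty (↥(Subtype.val ⁻¹' U : Set ↥s) ≃ₜ ↥U) := by
  refine ⟨{ toFun := fun z => ⟨z.1.1, z.2⟩
            invFun := fun w => ⟨⟨w.1, hU w.2⟩, w.2⟩
            left_inv := fun z => rfl
            right_inv := fun w => rfl
            continuous_toFun := ?_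
            continuous_invFun := ?_ }⟩
  · exact Continuous.subtype_mk (continuous_subtype_val.comp continuous_subtype_val) _
  · exact Continuous.subtype_mk (Continuous.subtype_mk continuous_subtype_val _) _

lemma core_disk (γe : ℝ → ℂ) (hγ : Continuous γe) (ε : ℝ) (hε : 0 < ε) :
    ∃ U : Set ℂ, IsOpen U ∧ U ⊆ Metric.thickening ε (γe '' Icc 0 1) ∧
      γe 0 ∈ U ∧ γe 1 ∈ U ∧ Nonempty (↥U ≃ₜ ↥(ball (0:ℂ) 1)) := by
  set y := γe 0 with hy
  set x := γe 1 with hx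
  set K := γe '' Icc (0:ℝ) 1 with hK
  have hyK : y ∈ K := ⟨0, ⟨le_rfl, zero_le_one⟩, rfl⟩
  by_cases hxy : dist x y < ε/2
  · refine ⟨ball y (ε/2), isOpen_ball, ?_, mem_ball_self (by linarith), by rwa [mem_ball],
      ball_homeo_unit _ _ (by linarith)⟩
    intro w hw
    rw [Metric.mem_thickening_iff]
    rw [mem_ball] at hw
    exact ⟨y, hyK, by linarith⟩
  · push_neg at hxy
    set r := ε/8 with hr
    have hr0 : 0 < r := by positivity
    set T := {t : ℝ | t ∈ Icc (0:ℝ) 1 ∧ γe t ∈ closedBall y r} with hT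
    have hT0 : (0:ℝ) ∈ T := ⟨⟨le_rfl, zero_le_one⟩, by simp [mem_closedBall, hr0.le, y]⟩
    have hTne : T.Nonempty := ⟨0, hT0⟩
    have hTbdd : BddAbove T := ⟨1, fun t ht => ht.1.2⟩
    have hTclosed : IsClosed T := by
      have : T = Icc (0:ℝ) 1 ∩ γe ⁻¹' (closedBall y r) := rfl
      rw [this]
      exact isClosed_Icc.inter (IsClosed.preimage hγ Metric.isClosed_closedBall)
    set t' := sSup T with ht'
    have ht'T : t' ∈ T := hTclosed.csSup_mem hTne hTbdd
    have ht'Icc : t' ∈ Icc (0:ℝ) 1 := ht'T.1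
    set c := γe t' with hc
    have hcy : dist c y ≤ r := by
      have := ht'T.2
      rwa [mem_closedBall] at this
    have ht'1 : t' < 1 := by
      rcases lt_or_eq_of_le ht'Icc.2 with h | h
      · exact h
      · exfalso
        have : c = x := by rw [hc, h]
        rw [this] at hcy
        have : r < ε/2 := by rw [hr]; linarith
        linarith
    set σ : ℝ → ℂ := fun u => γe (t' + u * (1 - t')) with hσ
    have hσcont : Continuous σ := hγ.comp (by continuity)
    have hσ0 : σ 0 = c := by simp [hσ, hc]
    have hσ1 : σ 1 = x := by simp [hσ, hx]
    have hmemIcc : ∀ u ∈ Icc (0:ℝ) 1, t' + u * (1 - t') ∈ Icc (0:ℝ) 1 := by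
      intro u hu
      constructor
      · nlinarith [hu.1, ht'Icc.1, ht'1]
      · nlinarith [hu.2, hu.1, ht'1]
    have havoid : ∀ u ∈ Ioc (0:ℝ) 1, r < dist (σ u) y := by
      intro u hu
      set t := t' + u * (1 - t') with htdef
      have ht_gt : t' < t := by nlinarith [hu.1, ht'1]
      have htIcc : t ∈ Icc (0:ℝ) 1 := hmemIcc u ⟨hu.1.le, hu.2⟩
      by_contra hle
      push_neg at hle
      have htT : t ∈ T := ⟨htIcc, by rwa [mem_closedBall]⟩
      have := le_csSup hTbdd htT
      rw [← ht'] at this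
      linarith
    have hcy_ge : r ≤ dist c y := by
      have htends : Tendsto (fun u => dist (σ u) y) (𝓝[>] (0:ℝ)) (𝓝 (dist c y)) := by
        have h1 : Tendsto (fun u => dist (σ u) y) (𝓝 (0:ℝ)) (𝓝 (dist (σ 0) y)) :=
          ((hσcont.dist continuous_const).tendsto 0)
        rw [hσ0] at h1
        exact h1.mono_left nhdsWithin_le_nhds
      refine ge_of_tendsto htends ?_
      filter_upwards [Ioc_mem_nhdsGT_of_mem (Set.left_mem_Ico.2 zero_lt_one)] with u hu
      exact (havoid u hu).le
    have hUC : UniformContinuousOn σ (Icc 0 1) :=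
      isCompact_Icc.uniformContinuousOn_of_continuous hσcont.continuousOn
    rw [Metric.uniformContinuousOn_iff] at hUC
    obtain ⟨δ, hδ0, hδ⟩ := hUC (r/8) (by positivity)
    obtain ⟨N0, hN0⟩ := exists_nat_one_div_lt hδ0
    set N := N0 + 1 with hNdef
    have hN1 : 1 ≤ N := Nat.le_add_left 1 N0
    have hNpos : (0:ℝ) < N := by positivity
    have hNd : (1:ℝ)/N < δ := by
      have : ((N:ℝ)) = (N0:ℝ) + 1 := by push_cast [hNdef]; ring
      rw [this]
      exact hN0
    set z : ℕ → ℂ := fun j => σ (j / N) with hz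
    have hz0 : z 0 = c := by simp [hz, hσ0]
    have hzN : z N = x := by
      have : ((N:ℝ)) / N = 1 := div_self hNpos.ne'
      simp [hz, this, hσ1]
    have hjN : ∀ j ≤ N, ((j:ℝ)/N) ∈ Icc (0:ℝ) 1 := by
      intro j hj
      constructor
      · positivity
      · rw [div_le_one hNpos]
        exact_mod_cast hj
    have hzK : ∀ j ≤ N, z j ∈ K := by
      intro j hj
      exact ⟨t' + (j/N) * (1 - t'), hmemIcc _ (hjN j hj), rfl⟩
    have hstep : ∀ j < N, dist (z j) (z (j+1)) < r/8 := by
      intro j hj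
      refine hδ _ (hjN j hj.le) _ (hjN (j+1) hj) ?_
      have hcast : (((j+1):ℕ):ℝ) = (j:ℝ) + 1 := by push_cast; ring
      have e : dist ((j:ℝ)/N) ((((j+1):ℕ):ℝ)/N) = 1/N := by
        rw [hcast, Real.dist_eq,
          show ((j:ℝ)/(N:ℝ) - ((j:ℝ)+1)/(N:ℝ)) = -(1/(N:ℝ)) from by ring, abs_neg,
          abs_of_pos (one_div_pos.2 hNpos)]
      rw [e]
      exact hNd
    have hzdist : ∀ j, 1 ≤ j → j ≤ N → r < dist (z j) y := by
      intro j h1 h2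
      apply havoid
      constructor
      · have : (0:ℝ) < j := by exact_mod_cast h1
        positivity
      · exact (hjN j h2).2
    obtain ⟨H, hH0, hHfix, hHim⟩ := exists_chainH z N
    set E := ball c (2*r) with hE
    have hHy : H y = y := by
      apply hHfix
      intro j hj
      have hd8 : dist (z j) (z (j+1)) < r/8 := hstep j hj
      have hyz : r ≤ dist y (z j) := by
        rcases Nat.eq_zero_or_pos j with rfl | hjpos
        · rw [hz0, dist_comm]
          exact hcy_ge
        · rw [dist_comm]
          exact (hzdist j hjpos hj.le).le
      linarith
    refine ⟨H '' E, (Homeomorph.isOpen_image H).2 isOpen_ball, ?_, ?_, ?_, ?_⟩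
    · have hcK : c ∈ K := by rw [← hz0]; exact hzK 0 (Nat.zero_le N)
      intro w hw
      rcases hHim E hw with hw' | hw'
      · rw [Metric.mem_thickening_iff]
        rw [hE, mem_ball] at hw'
        exact ⟨c, hcK, by linarith⟩
      · simp only [Finset.mem_range, Set.mem_iUnion, mem_closedBall] at hw'
        obtain ⟨j, hj, hwj⟩ := hw'
        rw [Metric.mem_thickening_iff]
        refine ⟨z j, hzK j hj.le, ?_⟩
        have := hstep j hj
        linarith
    · exact ⟨y, by rw [hE, mem_ball, dist_comm]; linarith, hHy⟩
    · exact ⟨c, by rw [hE]; exact mem_ball_self (by linarith), by rw [← hz0, hH0, hzN]⟩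
    · obtain ⟨e2⟩ := ball_homeo_unit c (2*r) (by linarith)
      exact ⟨(H.image E).symm.trans e2⟩

/-- Proposition 1.4, case (i): a closed chain of pairwise disjoint, free,
path-connected, nonempty subsets forces recurrence. -/
theorem handel_prop_1_4_i (f : ↥Disk ≃ₜ ↥Disk) (r : ℕ) (hr : 1 ≤ r)
    (X : ZMod r → Set ↥Disk)
    (hfree : ∀ i, IsFreeSet f (X i))
    (hpath : ∀ i, IsPathConnected (X i))
    (hne : ∀ i, (X i).Nonempty)
    (hdisj : Pairwise fun i j => Disjoint (X i) (X j))
    (hchain : ∀ i, ∃ k : ℤ, 1 ≤ k ∧ ((fiter f k '' X i) ∩ X (i + 1)).Nonempty) :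
    RecurrentHomeo f := by

  haveI : NeZero r := ⟨by omega⟩
  -- choose chain witnesses
  choose k hk1 hne2 using hchain
  choose w hw using hne2
  have hw1 : ∀ i, w i ∈ fiter f (k i) '' X i := fun i => (hw i).1
  have hw2 : ∀ i, w i ∈ X (i+1) := fun i => (hw i).2
  choose xx hxxX hxxw using hw1
  set y : ZMod r → ↥Disk := fun i => w (i - 1) with hydef
  have hyX : ∀ i, y i ∈ X i := by
    intro i
    have h := hw2 (i-1)
    rwa [sub_add_cancel] at h
  have hyw : ∀ i, y (i+1) = w i := by
    intro i
    simp only [hydef, add_sub_cancel_right]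
  -- paths inside the X i
  have hJ : ∀ i, JoinedIn (X i) (y i) (xx i) := fun i => (hpath i).joinedIn _ (hyX i) _ (hxxX i)
  set γ : (i : ZMod r) → Path (y i) (xx i) := fun i => (hJ i).somePath with hγdef
  have hγmem : ∀ i t, (γ i) t ∈ X i := fun i => (hJ i).somePath_mem
  set γe : ZMod r → ℝ → ℂ := fun i t => (((γ i).extend t : ↥Disk) : ℂ) with hγedef
  have hγe_cont : ∀ i, Continuous (γe i) :=
    fun i => continuous_subtype_val.comp (γ i).continuous_extend
  have hγe0 : ∀ i, γe i 0 = ((y i : ↥Disk) : ℂ) := by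
    intro i; simp only [hγedef, Path.extend_zero]
  have hγe1 : ∀ i, γe i 1 = ((xx i : ↥Disk) : ℂ) := by
    intro i; simp only [hγedef, Path.extend_one]
  -- compact arcs
  set Ksub : ZMod r → Set ↥Disk := fun i => range (γ i) with hKsubdef
  have hKsubcomp : ∀ i, IsCompact (Ksub i) := fun i => isCompact_range (γ i).continuous
  have hKsubX : ∀ i, Ksub i ⊆ X i := by
    rintro i _ ⟨t, rfl⟩; exact hγmem i t
  set K : ZMod r → Set ℂ := fun i => Subtype.val '' (Ksub i) with hKdef
  have hKcomp : ∀ i, IsCompact (K i) := fun i => (hKsubcomp i).image continuous_subtype_val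
  have hKe : ∀ i, γe i '' Icc 0 1 ⊆ K i := by
    rintro i _ ⟨t, _, rfl⟩
    have h1 : (γ i).extend t ∈ range ((γ i).extend) := mem_range_self t
    rw [Path.extend_range] at h1
    exact ⟨_, h1, rfl⟩
  have hKDisk : ∀ i, K i ⊆ ball (0:ℂ) 1 := by
    rintro i _ ⟨p, _, rfl⟩; exact p.2
  -- epsilon (1) : inside the disk
  have h1 : ∀ i, ∃ δ > 0, thickening δ (K i) ⊆ ball (0:ℂ) 1 :=
    fun i => (hKcomp i).exists_thickening_subset_open isOpen_ball (hKDisk i)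
  choose δ1 hδ1pos hδ1 using h1
  -- epsilon (2) : freeness separation
  set KF : ZMod r → Set ℂ := fun i => Subtype.val '' (f '' (Ksub i)) with hKFdef
  have hKFcomp : ∀ i, IsCompact (KF i) :=
    fun i => (((hKsubcomp i).image f.continuous).image continuous_subtype_val)
  have hdisjKF : ∀ i, Disjoint (K i) (KF i) := by
    intro i
    rw [Set.disjoint_left]
    rintro _ ⟨p, hp, rfl⟩ ⟨q, hq, hqp⟩
    have : p = q := Subtype.ext hqp.symm
    subst this
    have hmem : p ∈ (⇑f '' X i) ∩ X i := by
      constructor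
      · rcases hq with ⟨p0, hp0, rfl⟩
        exact ⟨p0, hKsubX i hp0, rfl⟩
      · exact hKsubX i hp
    rw [hfree i] at hmem
    exact hmem
  have h2 : ∀ i, ∃ δ, 0 < δ ∧
      Disjoint (thickening δ (K i)) (thickening δ (KF i)) :=
    fun i => (hdisjKF i).exists_thickenings (hKcomp i) (hKFcomp i).isClosed
  choose δ2 hδ2pos hδ2 using h2
  -- epsilon (3) : neighborhood mapping estimate (in the subtype)
  have h3 : ∀ i, ∃ δ > 0, thickening δ (Ksub i) ⊆
      {p : ↥Disk | ((f p : ↥Disk) : ℂ) ∈ thickening (δ2 i) (KF i)} := by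
    intro i
    apply (hKsubcomp i).exists_thickening_subset_open
    · exact isOpen_thickening.preimage (continuous_subtype_val.comp f.continuous)
    · intro p hp
      have : ((f p : ↥Disk) : ℂ) ∈ KF i := ⟨f p, ⟨p, hp, rfl⟩, rfl⟩
      exact self_subset_thickening (hδ2pos i) (KF i) this
  choose δ3 hδ3pos hδ3 using h3
  -- epsilon (4) : pairwise separation
  have h4 : ∀ i j, ∃ d, 0 < d ∧ (i ≠ j →
      Disjoint (thickening d (K i)) (thickening d (K j))) := by
    intro i j
    by_cases hij : i = j
    · exact ⟨1, one_pos, fun h => absurd hij h⟩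
    · have hdisjK : Disjoint (K i) (K j) := by
        rw [Set.disjoint_left]
        rintro _ ⟨p, hp, rfl⟩ ⟨q, hq, hqp⟩
        have hpq : p = q := Subtype.ext hqp.symm
        subst hpq
        exact Set.disjoint_left.1 (hdisj hij) (hKsubX i hp) (hKsubX j hq)
      obtain ⟨d, hd0, hd⟩ := hdisjK.exists_thickenings (hKcomp i) (hKcomp j).isClosed
      exact ⟨d, hd0, fun _ => hd⟩
  choose δ4 hδ4pos hδ4 using h4
  -- the global epsilon per index
  haveI : Nonempty (ZMod r) := ⟨0⟩
  set εf : ZMod r → ℝ := fun i =>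
    min (min (δ1 i) (δ2 i)) (min (δ3 i)
      (Finset.univ.inf' Finset.univ_nonempty (fun j => min (δ4 i j) (δ4 j i)))) with hεdef
  have hεpos : ∀ i, 0 < εf i := by
    intro i
    apply lt_min (lt_min (hδ1pos i) (hδ2pos i))
    apply lt_min (hδ3pos i)
    rw [Finset.lt_inf'_iff]
    exact fun j _ => lt_min (hδ4pos i j) (hδ4pos j i)
  have hεδ1 : ∀ i, εf i ≤ δ1 i := fun i => (min_le_left _ _).trans (min_le_left _ _)
  have hεδ2 : ∀ i, εf i ≤ δ2 i := fun i => (min_le_left _ _).trans (min_le_right _ _)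
  have hεδ3 : ∀ i, εf i ≤ δ3 i := fun i => (min_le_right _ _).trans (min_le_left _ _)
  have hεδ4 : ∀ i j, εf i ≤ min (δ4 i j) (δ4 j i) := fun i j =>
    ((min_le_right _ _).trans (min_le_right _ _)).trans (Finset.inf'_le _ (Finset.mem_univ j))
  -- construct the open disks
  have hcore := fun i => core_disk (γe i) (hγe_cont i) (εf i) (hεpos i)
  choose U hUopen hUthick hUy hUx hUhomeo using hcore
  have hUK : ∀ i, U i ⊆ thickening (εf i) (K i) :=
    fun i => (hUthick i).trans (thickening_subset_of_subset _ (hKe i))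
  have hUDisk : ∀ i, U i ⊆ ball (0:ℂ) 1 := by
    intro i
    refine (hUK i).trans ?_
    refine (thickening_mono (hεδ1 i) _).trans (hδ1 i)
  -- the sets in the subtype
  set X' : ZMod r → Set ↥Disk := fun i => Subtype.val ⁻¹' (U i) with hX'def
  -- key: points of X' i get mapped by f outside of U i
  have hfout : ∀ i, ∀ p : ↥Disk, (p : ℂ) ∈ U i → ((f p : ↥Disk) : ℂ) ∉ U i := by
    intro i p hp
    have hsub : p ∈ thickening (δ3 i) (Ksub i) := by
      have h' : (p : ℂ) ∈ thickening (εf i) (K i) := hUK i hp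
      rw [mem_thickening_iff] at h' ⊢
      obtain ⟨zc, ⟨q, hq, rfl⟩, hd⟩ := h'
      refine ⟨q, hq, ?_⟩
      rw [Subtype.dist_eq]
      exact lt_of_lt_of_le hd (hεδ3 i)
    have hfp : ((f p : ↥Disk) : ℂ) ∈ thickening (δ2 i) (KF i) := hδ3 i hsub
    intro hcon
    have h2 : ((f p : ↥Disk) : ℂ) ∈ thickening (δ2 i) (K i) :=
      thickening_mono (hεδ2 i) (K i) (hUK i hcon)
    exact Set.disjoint_left.1 (hδ2 i) h2 hfp
  refine ⟨r, hr, X', ?_, ?_, ?_, ?_⟩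
  · -- open disks
    intro i
    constructor
    · exact (hUopen i).preimage continuous_subtype_val
    · obtain ⟨e1⟩ := homeo_val_preimage Disk (U i) (hUDisk i)
      obtain ⟨e2⟩ := hUhomeo i
      exact ⟨e1.trans e2⟩
  · -- free
    intro i
    rw [IsFreeSet, eq_empty_iff_forall_notMem]
    rintro p ⟨⟨q, hq, rfl⟩, hp⟩
    exact hfout i q hq hp
  · -- pairwise disjoint
    intro i j hij
    rw [Set.disjoint_left]
    intro p hpi hpj
    have h1 : (p : ℂ) ∈ thickening (δ4 i j) (K i) :=
      thickening_mono ((hεδ4 i j).trans (min_le_left _ _)) (K i) (hUK i hpi)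
    have h2 : (p : ℂ) ∈ thickening (δ4 i j) (K j) := by
      refine thickening_mono ?_ (K j) (hUK j hpj)
      exact (hεδ4 j i).trans (min_le_right _ _)
    exact Set.disjoint_left.1 (hδ4 i j hij) h1 h2
  · -- chain condition
    intro i
    refine ⟨k i, hk1 i, w i, ⟨xx i, ?_, hxxw i⟩, ?_⟩
    · show ((xx i : ↥Disk) : ℂ) ∈ U i
      rw [← hγe1 i]
      exact hUx i
    · show ((w i : ↥Disk) : ℂ) ∈ U (i+1)
      have : w i = y (i+1) := (hyw i).symm
      rw [this, ← hγe0 (i+1)]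
      exact hUy (i+1)
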